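/- Let {M^x}_{x>0} be a family of quasianalytic regular weight sequences such that (M^x_k)^{1/k} → ∞ as k → ∞ for every x > 0, and M^x_k ≤ M^y_k for all k whenever x ≤ y. Then there exists a quasianalytic regular weight sequence L = (L_k) such that (L_k / M^x_k)^{1/k} → 0 as k → ∞ for every x > 0. -/
import Mathlib


open Filter Metric Set Asymptotics
open scoped BigOperators Topology NNReal

noncomputable section

/-- ℝⁿ with the Euclidean norm. -/
abbrev Euc (n : ℕ) := EuclideanSpace ℝ (Fin n)

/-- First-order partial derivative in the `i`-th coordinate direction. -/
def pder {n : ℕ} (i : Fin n) (f : Euc n → ℝ) : Euc n → ℝ :=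
  fun x => fderiv ℝ f x (EuclideanSpace.single i 1)

/-- The multi-index partial derivative `∂^α f`. -/
def pderM {n : ℕ} (α : Fin n → ℕ) (f : Euc n → ℝ) : Euc n → ℝ :=
  (List.finRange n).foldr (fun i g => (pder i)^[α i] g) f

/-- `|α| = ∑ i, α i`. -/
def mdeg {n : ℕ} (α : Fin n → ℕ) : ℕ := ∑ i, α i

/-- `‖f‖^M_{K,ρ} ≤ C`, spelled out:
`|∂^α f(x)| ≤ C ρ^{|α|} |α|! M_{|α|}` for all `x ∈ K` and multi-indices `α`. -/
def DCBound {n : ℕ} (M : ℕ → ℝ) (f : Euc n → ℝ) (K : Set (Euc n)) (ρ C : ℝ) : Prop :=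
  ∀ x ∈ K, ∀ α : Fin n → ℕ,
    |pderM α f x| ≤ C * ρ ^ mdeg α * (mdeg α).factorial * M (mdeg α)

/-- `‖f‖^M_{K,ρ} < ∞`. -/
def DCFinite {n : ℕ} (M : ℕ → ℝ) (f : Euc n → ℝ) (K : Set (Euc n)) (ρ : ℝ) : Prop :=
  ∃ C : ℝ, DCBound M f K ρ C

/-- The Denjoy–Carleman class of Roumieu type `E^{M}(U)`. -/
def Roumieu {n : ℕ} (M : ℕ → ℝ) (U : Set (Euc n)) (f : Euc n → ℝ) : Prop :=
  ContDiffOn ℝ (⊤ : ℕ∞) f U ∧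
  ∀ K : Set (Euc n), K ⊆ U → IsCompact K → ∃ ρ > 0, DCFinite M f K ρ

/-- The Denjoy–Carleman class of Beurling type `E^{(M)}(U)`. -/
def Beurling {n : ℕ} (M : ℕ → ℝ) (U : Set (Euc n)) (f : Euc n → ℝ) : Prop :=
  ContDiffOn ℝ (⊤ : ℕ∞) f U ∧
  ∀ K : Set (Euc n), K ⊆ U → IsCompact K → ∀ ρ > 0, DCFinite M f K ρ

/-- A regular weight sequence. -/
def RegularWeightSeq (M : ℕ → ℝ) : Prop :=
  (∀ k, 0 < M k) ∧
  (∀ k : ℕ, 1 ≤ k → (M k) ^ 2 ≤ M (k - 1) * M (k + 1)) ∧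
  M 0 = 1 ∧ 1 ≤ M 1 ∧
  Tendsto (fun k : ℕ => (M k) ^ ((k : ℝ)⁻¹)) atTop atTop

/-- Quasianalyticity of a weight sequence: `∑ M_k/((k+1) M_{k+1}) = ∞`. -/
def QAseq (M : ℕ → ℝ) : Prop :=
  ¬ Summable (fun k : ℕ => M k / ((k + 1) * M (k + 1)))

/-- `p : V → ℝⁿ` is an `E^{M}`-plot (Roumieu type): `V` is open and all
component functions of `p` belong to `E^{M}(V)`. -/
def RoumieuPlot {m n : ℕ} (M : ℕ → ℝ) (V : Set (Euc m)) (p : Euc m → Euc n) : Prop :=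
  IsOpen V ∧ ∀ j : Fin n, Roumieu M V (fun x => p x j)

/-- `p : V → ℝⁿ` is an `E^{(M)}`-plot (Beurling type). -/
def BeurlingPlot {m n : ℕ} (M : ℕ → ℝ) (V : Set (Euc m)) (p : Euc m → Euc n) : Prop :=
  IsOpen V ∧ ∀ j : Fin n, Beurling M V (fun x => p x j)

/-- `φ(t) = ω(e^t)`. -/
def youngPhi (ω : ℝ → ℝ) (t : ℝ) : ℝ := ω (Real.exp t)

/-- The Young conjugate `φ*(t) = sup_{s ≥ 0} (st - φ(s))`. -/
def youngStar (ω : ℝ → ℝ) (t : ℝ) : ℝ := ⨆ s : Ici (0 : ℝ), ((s : ℝ) * t - youngPhi ω s)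

/-- A weight function in the sense of Braun–Meise–Taylor. -/
def WeightFunction (ω : ℝ → ℝ) : Prop :=
  ContinuousOn ω (Ici 0) ∧ MonotoneOn ω (Ici 0) ∧ ω 0 = 0 ∧
  Tendsto ω atTop atTop ∧
  ((fun t => ω (2 * t)) =O[atTop] ω) ∧
  (ω =O[atTop] fun t => t) ∧
  (Real.log =o[atTop] ω) ∧
  ConvexOn ℝ univ (youngPhi ω)

/-- Quasianalyticity of a weight function: `∫_0^∞ ω(t)/(1+t²) dt = ∞`. -/
def QAweight (ω : ℝ → ℝ) : Prop :=
  ¬ MeasureTheory.IntegrableOn (fun t => ω t / (1 + t ^ 2)) (Ioi 0)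

/-- `‖f‖^ω_{K,ρ} ≤ C`. -/
def OmBound {n : ℕ} (ω : ℝ → ℝ) (f : Euc n → ℝ) (K : Set (Euc n)) (ρ C : ℝ) : Prop :=
  ∀ x ∈ K, ∀ α : Fin n → ℕ,
    |pderM α f x| ≤ C * Real.exp ((1 / ρ) * youngStar ω (ρ * (mdeg α : ℝ)))

/-- `‖f‖^ω_{K,ρ} < ∞`. -/
def OmFinite {n : ℕ} (ω : ℝ → ℝ) (f : Euc n → ℝ) (K : Set (Euc n)) (ρ : ℝ) : Prop :=
  ∃ C : ℝ, OmBound ω f K ρ C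

/-- The Braun–Meise–Taylor class of Roumieu type `E^{ω}(U)`. -/
def RoumieuW {n : ℕ} (ω : ℝ → ℝ) (U : Set (Euc n)) (f : Euc n → ℝ) : Prop :=
  ContDiffOn ℝ (⊤ : ℕ∞) f U ∧
  ∀ K : Set (Euc n), K ⊆ U → IsCompact K → ∃ ρ > 0, OmFinite ω f K ρ

/-- The Braun–Meise–Taylor class of Beurling type `E^{(ω)}(U)`. -/
def BeurlingW {n : ℕ} (ω : ℝ → ℝ) (U : Set (Euc n)) (f : Euc n → ℝ) : Prop :=
  ContDiffOn ℝ (⊤ : ℕ∞) f U ∧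
  ∀ K : Set (Euc n), K ⊆ U → IsCompact K → ∀ ρ > 0, OmFinite ω f K ρ

/-- An `E^{ω}`-plot (Roumieu type). -/
def RoumieuWPlot {m n : ℕ} (ω : ℝ → ℝ) (V : Set (Euc m)) (p : Euc m → Euc n) : Prop :=
  IsOpen V ∧ ∀ j : Fin n, RoumieuW ω V (fun x => p x j)

/-- An `E^{(ω)}`-plot (Beurling type). -/
def BeurlingWPlot {m n : ℕ} (ω : ℝ → ℝ) (V : Set (Euc m)) (p : Euc m → Euc n) : Prop :=
  IsOpen V ∧ ∀ j : Fin n, BeurlingW ω V (fun x => p x j)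

/-- `|K| = sup_{x ∈ K} |x|`. -/
def supNorm {n : ℕ} (K : Set (Euc n)) : ℝ := ⨆ x : K, ‖(x : Euc n)‖

/-- The class `E^{M}(ℝ)` for functions of one real variable. -/
def Roumieu1 (M : ℕ → ℝ) (g : ℝ → ℝ) : Prop :=
  ContDiff ℝ (⊤ : ℕ∞) g ∧
  ∀ K : Set ℝ, IsCompact K → ∃ ρ > 0, ∃ C : ℝ, ∀ t ∈ K, ∀ k : ℕ,
    |iteratedDeriv k g t| ≤ C * ρ ^ k * k.factorial * M k

/-- The class `A_m^{M}(U)`: smooth functions on `U` which are of class `E^{M}`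
along every `m`-dimensional `E^{M}`-plot in `U`. -/
def AClass {n : ℕ} (M : ℕ → ℝ) (m : ℕ) (U : Set (Euc n)) (f : Euc n → ℝ) : Prop :=
  ContDiffOn ℝ (⊤ : ℕ∞) f U ∧
  ∀ (V : Set (Euc m)) (p : Euc m → Euc n), IsOpen V → MapsTo p V U →
    (∀ j : Fin n, Roumieu M V (fun x => p x j)) → Roumieu M V (f ∘ p)

end


section AuxStatement11
open Filter Finset Real


lemma aux_rpow_inv_tendsto_one {C : ℝ} (hC : 0 < C) :
    Tendsto (fun k : ℕ => C ^ ((k:ℝ)⁻¹)) atTop (nhds 1) := by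
  have h0 : Tendsto (fun k : ℕ => ((k:ℝ)⁻¹)) atTop (nhds 0) :=
    tendsto_inv_atTop_zero.comp (tendsto_natCast_atTop_atTop (R := ℝ))
  have h1 : Tendsto (fun k : ℕ => ((k:ℝ)⁻¹) * Real.log C) atTop (nhds (0 * Real.log C)) :=
    h0.mul_const _
  rw [zero_mul] at h1
  have h2 := (Real.continuous_exp.tendsto 0).comp h1
  rw [Real.exp_zero] at h2
  refine h2.congr fun k => ?_
  simp only [Function.comp]
  rw [Real.rpow_def_of_pos hC, mul_comm]
lemma aux_geom_mean_zero (q : ℕ → ℝ) (hq : ∀ k, 0 < q k)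
    (h0 : Tendsto q atTop (nhds 0)) :
    Tendsto (fun k : ℕ => (∏ m ∈ Finset.range k, q m) ^ ((k:ℝ)⁻¹)) atTop (nhds 0) := by
  rw [Metric.tendsto_atTop]
  intro ε hε
  set η : ℝ := min ε 1 / 2 with hηdef
  have hηpos : 0 < η := by positivity
  have hηlt : 2 * η ≤ ε := by
    have : min ε 1 ≤ ε := min_le_left _ _
    simp only [hηdef]; linarith
  have hηle1 : η ≤ 1 := by
    have : min ε 1 ≤ 1 := min_le_right _ _
    simp only [hηdef]; linarith
  set δ : ℝ := η ^ 2 with hδdef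
  have hδpos : 0 < δ := by positivity
  obtain ⟨K, hK⟩ := (Metric.tendsto_atTop.mp h0) δ hδpos
  have hqle : ∀ m ≥ K, q m ≤ δ := by
    intro m hm
    have := hK m hm
    rw [Real.dist_eq, sub_zero] at this
    calc q m ≤ |q m| := le_abs_self _
      _ ≤ δ := this.le
  set C : ℝ := ∏ m ∈ Finset.range K, q m with hC
  have hCpos : 0 < C := Finset.prod_pos fun m _ => hq m
  have hC1 := aux_rpow_inv_tendsto_one hCpos
  have hevC : ∀ᶠ k : ℕ in atTop, C ^ ((k:ℝ)⁻¹) < 2 :=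
    hC1.eventually (eventually_lt_nhds (by norm_num : (1:ℝ) < 2))
  rw [eventually_atTop] at hevC
  obtain ⟨K1, hK1⟩ := hevC
  refine ⟨max (2*K + 1) K1, fun k hk => ?_⟩
  have hk1 : 2*K + 1 ≤ k := le_trans (le_max_left _ _) hk
  have hk2 : K1 ≤ k := le_trans (le_max_right _ _) hk
  have hkpos : 0 < k := by omega
  have hKk : K ≤ k := by omega
  have hprod : ∏ m ∈ Finset.range k, q m ≤ C * δ ^ (k - K) := by
    rw [← Finset.prod_range_mul_prod_Ico _ hKk]
    refine mul_le_mul_of_nonneg_left ?_ hCpos.le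
    calc ∏ m ∈ Finset.Ico K k, q m ≤ ∏ m ∈ Finset.Ico K k, δ := by
          refine Finset.prod_le_prod (fun m _ => (hq m).le) ?_
          intro m hm; exact hqle m (Finset.mem_Ico.mp hm).1
      _ = δ ^ (k - K) := by rw [Finset.prod_const, Nat.card_Ico]
  have hpk : (0:ℝ) < ∏ m ∈ Finset.range k, q m := Finset.prod_pos fun m _ => hq m
  have hle : (∏ m ∈ Finset.range k, q m) ^ ((k:ℝ)⁻¹) ≤ (C * δ ^ (k - K)) ^ ((k:ℝ)⁻¹) :=
    Real.rpow_le_rpow hpk.le hprod (by positivity)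
  have hsplit : (C * δ ^ (k - K)) ^ ((k:ℝ)⁻¹)
      = C ^ ((k:ℝ)⁻¹) * ((δ ^ (k-K : ℕ)) ^ ((k:ℝ)⁻¹)) :=
    Real.mul_rpow hCpos.le (by positivity)
  have hδpart : (δ ^ (k-K : ℕ)) ^ ((k:ℝ)⁻¹) ≤ η := by
    have heq : (δ ^ (k-K : ℕ)) ^ ((k:ℝ)⁻¹) = η ^ (((2*(k-K) : ℕ):ℝ) * (k:ℝ)⁻¹) := by
      rw [hδdef, ← pow_mul, ← Real.rpow_natCast η (2*(k - K)), ← Real.rpow_mul hηpos.le]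
    rw [heq]
    nth_rewrite 2 [← Real.rpow_one η]
    apply Real.rpow_le_rpow_of_exponent_ge hηpos hηle1
    have hk' : (k:ℝ) ≤ ((2*(k-K) : ℕ):ℝ) := by exact_mod_cast (by omega : k ≤ 2*(k-K))
    calc (1:ℝ) = (k:ℝ) * (k:ℝ)⁻¹ := by
          rw [mul_inv_cancel₀ (by exact_mod_cast hkpos.ne' : (k:ℝ) ≠ 0)]
      _ ≤ ((2*(k-K) : ℕ):ℝ) * (k:ℝ)⁻¹ := by
          apply mul_le_mul_of_nonneg_right hk' (by positivity)
  rw [Real.dist_eq, sub_zero, abs_of_pos (Real.rpow_pos_of_pos hpk _)]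
  calc (∏ m ∈ Finset.range k, q m) ^ ((k:ℝ)⁻¹)
      ≤ C ^ ((k:ℝ)⁻¹) * ((δ ^ (k-K : ℕ)) ^ ((k:ℝ)⁻¹)) := by rw [← hsplit]; exact hle
    _ ≤ C ^ ((k:ℝ)⁻¹) * η :=
        mul_le_mul_of_nonneg_left hδpart (Real.rpow_pos_of_pos hCpos _).le
    _ < 2 * η := mul_lt_mul_of_pos_right (hK1 k hk2) hηpos
    _ ≤ ε := hηlt


lemma aux_geom_mean_atTop (l : ℕ → ℝ) (h1 : ∀ k, 1 ≤ l k)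
    (h : Tendsto l atTop atTop) :
    Tendsto (fun k : ℕ => (∏ m ∈ Finset.range k, l m) ^ ((k:ℝ)⁻¹)) atTop atTop := by
  rw [Filter.tendsto_atTop]
  intro C
  set C' : ℝ := max C 1 with hC'
  have hC'1 : 1 ≤ C' := le_max_right _ _
  have hC'pos : 0 < C' := lt_of_lt_of_le one_pos hC'1
  obtain ⟨K, hK⟩ := eventually_atTop.mp (h.eventually_ge_atTop (C' ^ 2))
  rw [eventually_atTop]
  refine ⟨2*K + 1, fun k hk => ?_⟩
  have hkpos : 0 < k := by omega
  have hKk : K ≤ k := by omega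
  have hprod : C' ^ k ≤ ∏ m ∈ Finset.range k, l m := by
    calc C' ^ k ≤ (C' ^ 2) ^ (k - K) := by
          rw [← pow_mul]
          exact pow_le_pow_right₀ hC'1 (by omega)
      _ = ∏ m ∈ Finset.Ico K k, C' ^ 2 := by rw [Finset.prod_const, Nat.card_Ico]
      _ ≤ ∏ m ∈ Finset.Ico K k, l m := by
          refine Finset.prod_le_prod (fun m _ => by positivity) ?_
          intro m hm; exact hK m (Finset.mem_Ico.mp hm).1
      _ ≤ ∏ m ∈ Finset.range k, l m := by
          rw [← Finset.prod_range_mul_prod_Ico _ hKk]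
          have hb : (0:ℝ) ≤ ∏ m ∈ Finset.Ico K k, l m :=
            Finset.prod_nonneg fun m _ => le_trans zero_le_one (h1 m)
          have ha : (1:ℝ) ≤ ∏ m ∈ Finset.range K, l m := by
            calc (1:ℝ) = ∏ m ∈ Finset.range K, 1 := by simp
              _ ≤ ∏ m ∈ Finset.range K, l m :=
                Finset.prod_le_prod (fun m _ => zero_le_one) (fun m _ => h1 m)
          exact le_mul_of_one_le_left hb ha
  calc C ≤ C' := le_max_left _ _
    _ = (C' ^ k) ^ ((k:ℝ)⁻¹) := by
        rw [← Real.rpow_natCast C' k, ← Real.rpow_mul hC'pos.le,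
          mul_inv_cancel₀ (by exact_mod_cast hkpos.ne' : (k:ℝ) ≠ 0), Real.rpow_one]
    _ ≤ (∏ m ∈ Finset.range k, l m) ^ ((k:ℝ)⁻¹) :=
        Real.rpow_le_rpow (by positivity) hprod (by positivity)


theorem statement11_core (M : ℝ → ℕ → ℝ)
    (hreg : ∀ x : ℝ, 0 < x →
      ((∀ k, 0 < M x k) ∧
       (∀ k : ℕ, 1 ≤ k → (M x k) ^ 2 ≤ M x (k - 1) * M x (k + 1)) ∧
       M x 0 = 1 ∧ 1 ≤ M x 1 ∧
       Tendsto (fun k : ℕ => (M x k) ^ ((k : ℝ)⁻¹)) atTop atTop))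
    (hqa : ∀ x : ℝ, 0 < x → ¬ Summable (fun k : ℕ => M x k / ((k + 1) * M x (k + 1))))
    (hmono : ∀ x y : ℝ, 0 < x → x ≤ y → ∀ k, M x k ≤ M y k) :
    ∃ L : ℕ → ℝ,
      ((∀ k, 0 < L k) ∧
       (∀ k : ℕ, 1 ≤ k → (L k) ^ 2 ≤ L (k - 1) * L (k + 1)) ∧
       L 0 = 1 ∧ 1 ≤ L 1 ∧
       Tendsto (fun k : ℕ => (L k) ^ ((k : ℝ)⁻¹)) atTop atTop) ∧
      (¬ Summable (fun k : ℕ => L k / ((k + 1) * L (k + 1)))) ∧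
      ∀ x : ℝ, 0 < x →
        Tendsto (fun k : ℕ => (L k / M x k) ^ ((k : ℝ)⁻¹)) atTop (nhds 0) := by
  classical
  have hxpos : ∀ j : ℕ, (0:ℝ) < ((j:ℝ)+1)⁻¹ := fun j => by positivity
  set N : ℕ → ℕ → ℝ := fun j k => M (((j:ℝ)+1)⁻¹) k with hNdef
  have hNpos : ∀ j k, 0 < N j k := fun j => (hreg _ (hxpos j)).1
  have hNcvx : ∀ j k, 1 ≤ k → N j k ^ 2 ≤ N j (k-1) * N j (k+1) :=
    fun j => (hreg _ (hxpos j)).2.1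
  have hN0 : ∀ j, N j 0 = 1 := fun j => (hreg _ (hxpos j)).2.2.1
  have hN1 : ∀ j, 1 ≤ N j 1 := fun j => (hreg _ (hxpos j)).2.2.2.1
  have hNtend : ∀ j, Tendsto (fun k : ℕ => (N j k) ^ ((k:ℝ)⁻¹)) atTop atTop :=
    fun j => (hreg _ (hxpos j)).2.2.2.2
  have hNqa : ∀ j, ¬ Summable (fun k : ℕ => N j k / ((k + 1) * N j (k + 1))) :=
    fun j => hqa _ (hxpos j)
  -- ratio sequences
  set μ : ℕ → ℕ → ℝ := fun j k => N j (k+1) / N j k with hμdef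
  have hμpos : ∀ j k, 0 < μ j k := fun j k => div_pos (hNpos j (k+1)) (hNpos j k)
  have hμmono : ∀ j, Monotone (μ j) := by
    intro j
    apply monotone_nat_of_le_succ
    intro k
    have h := hNcvx j (k+1) (by omega)
    rw [Nat.add_sub_cancel] at h
    show N j (k+1) / N j k ≤ N j (k+2) / N j (k+1)
    rw [div_le_div_iff₀ (hNpos j k) (hNpos j (k+1))]
    nlinarith [hNpos j k, hNpos j (k+1), hNpos j (k+2)]
  have hμ1 : ∀ j k, 1 ≤ μ j k := by
    intro j k
    have h0 : μ j 0 = N j 1 := by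
      show N j 1 / N j 0 = N j 1
      rw [hN0 j, div_one]
    calc (1:ℝ) ≤ μ j 0 := by rw [h0]; exact hN1 j
      _ ≤ μ j k := hμmono j (Nat.zero_le k)
  have hNprod : ∀ j k, N j k = ∏ m ∈ Finset.range k, μ j m := by
    intro j k
    induction k with
    | zero => simp [hN0 j]
    | succ n ih =>
      rw [Finset.prod_range_succ, ← ih]
      show N j (n+1) = N j n * (N j (n+1) / N j n)
      rw [mul_div_cancel₀ _ (hNpos j n).ne']
  have hμtend : ∀ j, Tendsto (μ j) atTop atTop := by
    intro j
    apply tendsto_atTop_atTop_of_monotone (hμmono j)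
    by_contra h
    push_neg at h
    obtain ⟨B, hB⟩ := h
    have hB1 : 1 ≤ B := le_of_lt (lt_of_le_of_lt (hμ1 j 0) (hB 0))
    have hbound : ∀ k : ℕ, 1 ≤ k → (N j k) ^ ((k:ℝ)⁻¹) ≤ B := by
      intro k hk
      have h1 : N j k ≤ B ^ k := by
        rw [hNprod j k]
        calc ∏ m ∈ Finset.range k, μ j m ≤ ∏ m ∈ Finset.range k, B :=
              Finset.prod_le_prod (fun m _ => (hμpos j m).le) (fun m _ => (hB m).le)
          _ = B ^ k := by rw [Finset.prod_const, Finset.card_range]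
      calc (N j k) ^ ((k:ℝ)⁻¹) ≤ (B ^ k) ^ ((k:ℝ)⁻¹) :=
            Real.rpow_le_rpow (hNpos j k).le h1 (by positivity)
        _ = B := by
            rw [← Real.rpow_natCast B k, ← Real.rpow_mul (by linarith : (0:ℝ) ≤ B),
              mul_inv_cancel₀ (by exact_mod_cast (by omega : k ≠ 0) : (k:ℝ) ≠ 0),
              Real.rpow_one]
    have := (hNtend j).eventually_ge_atTop (B + 1)
    rw [eventually_atTop] at this
    obtain ⟨K, hK⟩ := this
    have h1 := hK (K + 1) (by omega)
    have h2 := hbound (K + 1) (by omega)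
    linarith
  -- the min over the first T+1 ratio sequences
  set mm : ℕ → ℕ → ℝ := fun T k =>
    (Finset.range (T+1)).inf' Finset.nonempty_range_add_one (fun i => μ i k) with hmmdef
  have hmm_le : ∀ T k i, i ≤ T → mm T k ≤ μ i k := by
    intro T k i hi
    exact Finset.inf'_le _ (Finset.mem_range.mpr (by omega))
  have hmm_ge : ∀ T k (c : ℝ), (∀ i ≤ T, c ≤ μ i k) → c ≤ mm T k := by
    intro T k c hc
    apply Finset.le_inf'
    intro i hi
    exact hc i (Nat.lt_succ_iff.mp (Finset.mem_range.mp hi))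
  have hmm_ge1 : ∀ T k, (1:ℝ) ≤ mm T k := fun T k => hmm_ge T k 1 (fun i _ => hμ1 i k)
  have hmm_pos : ∀ T k, (0:ℝ) < mm T k := fun T k => lt_of_lt_of_le one_pos (hmm_ge1 T k)
  -- choose thresholds Km
  have hKmex : ∀ m : ℕ, ∃ Km : ℕ, ∀ k, Km ≤ k → ∀ i ≤ m, (m:ℝ) * Real.exp m ≤ μ i k := by
    intro m
    have hev : ∀ᶠ k in atTop, ∀ i ∈ Finset.range (m+1), (m:ℝ) * Real.exp m ≤ μ i k := by
      rw [Filter.eventually_all_finset]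
      intro i _
      exact (hμtend i).eventually_ge_atTop _
    rw [eventually_atTop] at hev
    obtain ⟨Km, hKm⟩ := hev
    exact ⟨Km, fun k hk i hi => hKm k hk i (Finset.mem_range.mpr (by omega))⟩
  choose Km hKm using hKmex
  set K' : ℕ → ℕ := fun m => m + (Finset.range (m+1)).sup Km with hK'def
  have hK'Km : ∀ m, Km m ≤ K' m := by
    intro m
    calc Km m ≤ (Finset.range (m+1)).sup Km :=
          Finset.le_sup (Finset.mem_range.mpr (by omega))
      _ ≤ K' m := Nat.le_add_left _ _
  -- the block index function
  set jj : ℕ → ℕ := fun k => Nat.findGreatest (fun m => K' m ≤ k) k with hjjdef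
  have hjj_spec : ∀ k, K' 0 ≤ k → K' (jj k) ≤ k :=
    fun k h => Nat.findGreatest_spec (P := fun m => K' m ≤ k) (Nat.zero_le k) h
  have hjj_ge : ∀ m k, m ≤ k → K' m ≤ k → m ≤ jj k :=
    fun m k h1 h2 => Nat.le_findGreatest h1 h2
  have hjj_tend : Tendsto jj atTop atTop := by
    rw [Filter.tendsto_atTop]
    intro b
    rw [eventually_atTop]
    refine ⟨max b (K' b), fun k hk => ?_⟩
    exact hjj_ge b k (le_trans (le_max_left _ _) hk) (le_trans (le_max_right _ _) hk)
  -- the building-block sequence g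
  set g : ℕ → ℝ := fun k => Real.exp (-(jj k : ℝ)) * mm (jj k) k with hgdef
  have hgpos : ∀ k, 0 < g k := fun k => mul_pos (Real.exp_pos _) (hmm_pos _ _)
  have hg_le_mu0 : ∀ k, g k ≤ μ 0 k := by
    intro k
    calc g k ≤ 1 * mm (jj k) k := by
          apply mul_le_mul_of_nonneg_right _ (hmm_pos _ _).le
          rw [Real.exp_le_one_iff]
          simp
      _ = mm (jj k) k := one_mul _
      _ ≤ μ 0 k := hmm_le _ _ 0 (Nat.zero_le _)
  have hg_ge : ∀ k, K' 0 ≤ k → (jj k : ℝ) ≤ g k := by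
    intro k hk
    have h1 : K' (jj k) ≤ k := hjj_spec k hk
    have h2 : Km (jj k) ≤ k := le_trans (hK'Km _) h1
    have h3 : ((jj k : ℕ):ℝ) * Real.exp (jj k) ≤ mm (jj k) k :=
      hmm_ge _ _ _ (hKm (jj k) k h2)
    calc (jj k : ℝ) = Real.exp (-(jj k : ℝ)) * ((jj k : ℝ) * Real.exp (jj k)) := by
          rw [mul_comm (jj k : ℝ) (Real.exp _), ← mul_assoc, ← Real.exp_add]
          simp
      _ ≤ g k := mul_le_mul_of_nonneg_left h3 (Real.exp_pos _).le
  -- the ratio sequence of L : running max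
  set lam : ℕ → ℝ := fun k =>
    max 1 ((Finset.range (k+1)).sup' Finset.nonempty_range_add_one g) with hlamdef
  have hlam1 : ∀ k, (1:ℝ) ≤ lam k := fun k => le_max_left _ _
  have hlampos : ∀ k, (0:ℝ) < lam k := fun k => lt_of_lt_of_le one_pos (hlam1 k)
  have hlam_ge_g : ∀ m k, m ≤ k → g m ≤ lam k := by
    intro m k h
    calc g m ≤ (Finset.range (k+1)).sup' Finset.nonempty_range_add_one g :=
          Finset.le_sup' g (Finset.mem_range.mpr (by omega))
      _ ≤ lam k := le_max_right _ _
  have hlam_mono : Monotone lam := by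
    apply monotone_nat_of_le_succ
    intro k
    apply max_le (hlam1 (k+1))
    apply Finset.sup'_le
    intro m hm
    exact hlam_ge_g m (k+1) (by
      have := Finset.mem_range.mp hm; omega)
  have hlam_le_mu0 : ∀ k, lam k ≤ μ 0 k := by
    intro k
    apply max_le (hμ1 0 k)
    apply Finset.sup'_le
    intro m hm
    calc g m ≤ μ 0 m := hg_le_mu0 m
      _ ≤ μ 0 k := hμmono 0 (by have := Finset.mem_range.mp hm; omega)
  have hlam_tend : Tendsto lam atTop atTop := by
    rw [Filter.tendsto_atTop]
    intro b
    obtain ⟨m, hm⟩ := exists_nat_ge b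
    rw [eventually_atTop]
    refine ⟨max (max m (K' m)) (K' 0), fun k hk => ?_⟩
    have hk1 : m ≤ k := le_trans (le_trans (le_max_left _ _) (le_max_left _ _)) hk
    have hk2 : K' m ≤ k := le_trans (le_trans (le_max_right _ _) (le_max_left _ _)) hk
    have hk3 : K' 0 ≤ k := le_trans (le_max_right _ _) hk
    have hjm : m ≤ jj k := hjj_ge m k hk1 hk2
    calc b ≤ (m : ℝ) := hm
      _ ≤ (jj k : ℝ) := by exact_mod_cast hjm
      _ ≤ g k := hg_ge k hk3
      _ ≤ lam k := hlam_ge_g k k le_rfl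
  -- smallness of lam against each μ i
  have hlam_div : ∀ i, Tendsto (fun k => lam k / μ i k) atTop (nhds 0) := by
    intro i
    rw [Metric.tendsto_atTop]
    intro ε hε
    obtain ⟨T, hT1, hT2⟩ : ∃ T : ℕ, i ≤ T ∧ Real.exp (-(T:ℝ)) ≤ ε/2 := by
      obtain ⟨T0, hT0⟩ := exists_nat_ge (Real.log (2/ε))
      refine ⟨max i T0, le_max_left _ _, ?_⟩
      have hc : (T0 : ℝ) ≤ ((max i T0 : ℕ) : ℝ) := by
        exact_mod_cast Nat.le_max_right i T0
      have hlog : Real.log (2/ε) ≤ ((max i T0 : ℕ) : ℝ) := le_trans hT0 hc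
      calc Real.exp (-((max i T0 : ℕ) : ℝ)) ≤ Real.exp (-(Real.log (2/ε))) :=
            Real.exp_le_exp.mpr (by linarith)
        _ = (2/ε)⁻¹ := by rw [Real.exp_neg, Real.exp_log (by positivity)]
        _ = ε/2 := by rw [inv_div]
    obtain ⟨K₀, hK₀⟩ := eventually_atTop.mp (hjj_tend.eventually_ge_atTop T)
    have hclaim : ∀ k, lam k ≤ max (lam K₀) (Real.exp (-(T:ℝ)) * μ i k) := by
      intro k
      apply max_le (le_trans (hlam1 K₀) (le_max_left _ _))
      apply Finset.sup'_le
      intro m hm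
      have hmk : m ≤ k := by have := Finset.mem_range.mp hm; omega
      rcases le_or_gt m K₀ with h | h
      · exact le_trans (hlam_ge_g m K₀ h) (le_max_left _ _)
      · have hjm : T ≤ jj m := hK₀ m h.le
        have him : i ≤ jj m := le_trans hT1 hjm
        refine le_trans ?_ (le_max_right _ _)
        calc g m = Real.exp (-(jj m : ℝ)) * mm (jj m) m := rfl
          _ ≤ Real.exp (-(T:ℝ)) * μ i m := by
              apply mul_le_mul
              · apply Real.exp_le_exp.mpr
                simp only [neg_le_neg_iff]
                exact_mod_cast hjm
              · exact hmm_le _ _ i him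
              · exact (hmm_pos _ _).le
              · exact (Real.exp_pos _).le
          _ ≤ Real.exp (-(T:ℝ)) * μ i k :=
              mul_le_mul_of_nonneg_left (hμmono i hmk) (Real.exp_pos _).le
    obtain ⟨K₁, hK₁⟩ := eventually_atTop.mp
      ((hμtend i).eventually_ge_atTop (2 * lam K₀ / ε))
    refine ⟨K₁, fun k hk => ?_⟩
    have hμk := hK₁ k hk
    have hμp : 0 < μ i k := hμpos i k
    rw [Real.dist_eq, sub_zero, abs_of_pos (div_pos (hlampos k) hμp)]
    rw [div_lt_iff₀ hμp]
    have h1 : lam K₀ ≤ ε/2 * μ i k := by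
      rw [div_le_iff₀ hε] at hμk
      linarith
    have h2 : Real.exp (-(T:ℝ)) * μ i k ≤ ε/2 * μ i k :=
      mul_le_mul_of_nonneg_right hT2 hμp.le
    calc lam k ≤ max (lam K₀) (Real.exp (-(T:ℝ)) * μ i k) := hclaim k
      _ ≤ ε/2 * μ i k := max_le h1 h2
      _ < ε * μ i k := by nlinarith
  -- the sequence L
  set L : ℕ → ℝ := fun k => ∏ m ∈ Finset.range k, lam m with hLdef
  have hLpos : ∀ k, 0 < L k := fun k => Finset.prod_pos fun m _ => hlampos m
  have hLsucc : ∀ k, L (k+1) = L k * lam k := fun k => Finset.prod_range_succ _ _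
  refine ⟨L, ⟨hLpos, ?_, ?_, ?_, ?_⟩, ?_, ?_⟩
  · -- log convexity
    intro k hk
    obtain ⟨n, rfl⟩ : ∃ n, k = n + 1 := ⟨k - 1, by omega⟩
    rw [Nat.add_sub_cancel, hLsucc, hLsucc, hLsucc]
    have h1 : lam n ≤ lam (n+1) := hlam_mono (by omega)
    have h2 := hLpos n
    have h3 := hlampos n
    nlinarith
  · simp [hLdef]
  · rw [show (1:ℕ) = 0 + 1 from rfl, hLsucc]
    simp only [hLdef, Finset.range_zero, Finset.prod_empty, one_mul]
    exact hlam1 0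
  · exact aux_geom_mean_atTop lam hlam1 hlam_tend
  · -- quasianalyticity
    intro hs
    apply hNqa 0
    refine Summable.of_nonneg_of_le (fun k => ?_) (fun k => ?_) hs
    · exact div_nonneg (hNpos 0 k).le
        (mul_nonneg (by positivity) (hNpos 0 (k+1)).le)
    · have hkpos : (0:ℝ) < (k:ℝ) + 1 := by positivity
      have e1 : L k / (((k:ℝ) + 1) * L (k+1)) = 1 / (((k:ℝ)+1) * lam k) := by
        rw [hLsucc]
        rw [div_eq_div_iff
          (mul_pos hkpos (mul_pos (hLpos k) (hlampos k))).ne'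
          (mul_pos hkpos (hlampos k)).ne']
        ring
      have e2 : N 0 k / (((k:ℝ) + 1) * N 0 (k+1)) = 1 / (((k:ℝ)+1) * μ 0 k) := by
        show N 0 k / (((k:ℝ) + 1) * N 0 (k+1)) = 1 / (((k:ℝ)+1) * (N 0 (k+1) / N 0 k))
        rw [div_eq_div_iff
          (mul_pos hkpos (hNpos 0 (k+1))).ne'
          (mul_pos hkpos (div_pos (hNpos 0 (k+1)) (hNpos 0 k))).ne']
        field_simp [(hNpos 0 k).ne']
      rw [e1, e2]
      apply one_div_le_one_div_of_le (mul_pos hkpos (hlampos k))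
      exact mul_le_mul_of_nonneg_left (hlam_le_mu0 k) hkpos.le
  · -- smallness
    intro x hx
    obtain ⟨i, hi⟩ : ∃ i : ℕ, x⁻¹ ≤ (i:ℝ) + 1 := by
      obtain ⟨i, h⟩ := exists_nat_ge x⁻¹
      exact ⟨i, by linarith⟩
    have hxi : ((i:ℝ)+1)⁻¹ ≤ x := by
      rw [inv_le_comm₀ (by positivity) hx]
      exact hi
    have hNM : ∀ k, N i k ≤ M x k := hmono _ x (hxpos i) hxi
    have hMpos : ∀ k, 0 < M x k := (hreg x hx).1
    have hmain := aux_geom_mean_zero (fun k => lam k / μ i k)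
      (fun k => div_pos (hlampos k) (hμpos i k)) (hlam_div i)
    have hprodeq : ∀ k, ∏ m ∈ Finset.range k, (lam m / μ i m) = L k / N i k := by
      intro k
      rw [Finset.prod_div_distrib, hNprod i k]
    apply squeeze_zero (g := fun k : ℕ => (L k / N i k) ^ ((k:ℝ)⁻¹))
    · intro k
      exact Real.rpow_nonneg (div_nonneg (hLpos k).le (hMpos k).le) _
    · intro k
      apply Real.rpow_le_rpow (div_nonneg (hLpos k).le (hMpos k).le) ?_ (by positivity)
      exact div_le_div_of_nonneg_left (hLpos k).le (hNpos i k) (hNM k)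
    · refine hmain.congr fun k => ?_
      rw [hprodeq k]

end AuxStatement11

/-- Given a monotone family `{M^x}_{x>0}` of quasianalytic regular weight
sequences there is a quasianalytic regular weight sequence `L` with
`(L_k/M^x_k)^{1/k} → 0` for every `x > 0`. -/
theorem statement11 (M : ℝ → ℕ → ℝ)
    (hreg : ∀ x : ℝ, 0 < x → RegularWeightSeq (M x))
    (hqa : ∀ x : ℝ, 0 < x → QAseq (M x))
    (hinf : ∀ x : ℝ, 0 < x →
      Filter.Tendsto (fun k : ℕ => (M x k) ^ ((k : ℝ)⁻¹)) Filter.atTop Filter.atTop)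
    (hmono : ∀ x y : ℝ, 0 < x → x ≤ y → ∀ k, M x k ≤ M y k) :
    ∃ L : ℕ → ℝ, RegularWeightSeq L ∧ QAseq L ∧
      ∀ x : ℝ, 0 < x →
        Filter.Tendsto (fun k : ℕ => (L k / M x k) ^ ((k : ℝ)⁻¹))
          Filter.atTop (nhds 0) := by
  obtain ⟨L, h1, h2, h3⟩ := statement11_core M hreg hqa hmono
  exact ⟨L, h1, h2, h3⟩
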